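/- The complex Heisenberg Lie algebra of dimension 3 (basis x₁,x₂,x₃ with [x₁,x₂] = x₃ and all other brackets zero) admits a periodic derivation of order six, namely D = diag(1, ω, 1+ω) where ω = e^{2πi/3}. -/

import Mathlib

noncomputable def ω : ℂ := Complex.exp (2 * Real.pi * Complex.I / 3)

lemma ω_prim : IsPrimitiveRoot ω 3 := by
  simpa [ω] using Complex.isPrimitiveRoot_exp 3 (by norm_num)

lemma ω_pow3 : ω ^ 3 = 1 := ω_prim.pow_eq_one

lemma ω_ne_one : ω ≠ 1 := ω_prim.ne_one (by norm_num)

lemma ω_sum : 1 + ω + ω ^ 2 = 0 := by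
  have hfac : (ω - 1) * (1 + ω + ω ^ 2) = 0 := by linear_combination ω_pow3
  rcases mul_eq_zero.mp hfac with h | h
  · exact absurd (sub_eq_zero.mp h) ω_ne_one
  · exact h

theorem heisenberg_periodic_derivation (L : Type*) [LieRing L] [LieAlgebra ℂ L]
    (b : Module.Basis (Fin 3) ℂ L)
    (h01 : ⁅b 0, b 1⁆ = b 2)
    (h02 : ⁅b 0, b 2⁆ = 0) (h12 : ⁅b 1, b 2⁆ = 0) :
    ∃ D : LieDerivation ℂ L L,
      D (b 0) = b 0 ∧ D (b 1) = ω • b 1 ∧ D (b 2) = (1 + ω) • b 2 ∧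
      D.toLinearMap ^ 6 = 1 ∧ ∀ k : ℕ, 0 < k → k < 6 → D.toLinearMap ^ k ≠ 1 := by
  classical
  set c : Fin 3 → ℂ := ![1, ω, 1 + ω] with hc
  set f : L →ₗ[ℂ] L := b.constr ℂ (fun i => c i • b i) with hf
  have hfb : ∀ i, f (b i) = c i • b i := fun i => b.constr_basis ℂ _ i
  have h10 : ⁅b 1, b 0⁆ = -b 2 := by rw [← lie_skew, h01]
  have h20 : ⁅b 2, b 0⁆ = 0 := by rw [← lie_skew, h02, neg_zero]
  have h21 : ⁅b 2, b 1⁆ = 0 := by rw [← lie_skew, h12, neg_zero]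
  have key : ∀ i j, f ⁅b i, b j⁆ = ⁅f (b i), b j⁆ + ⁅b i, f (b j)⁆ := by
    intro i j
    fin_cases i <;> fin_cases j <;>
      simp [hfb, h01, h02, h12, h10, h20, h21, hc, lie_smul, smul_lie, add_smul,
        one_smul, smul_neg] <;> abel
  have leib : ∀ x y : L, f ⁅x, y⁆ = ⁅f x, y⁆ + ⁅x, f y⁆ := by
    intro x y
    let B1 : L →ₗ[ℂ] L →ₗ[ℂ] L := LinearMap.mk₂ ℂ (fun x y => f ⁅x, y⁆)
      (by intros; simp [add_lie]) (by intros; simp [smul_lie])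
      (by intros; simp [lie_add]) (by intros; simp [lie_smul])
    let B2 : L →ₗ[ℂ] L →ₗ[ℂ] L := LinearMap.mk₂ ℂ (fun x y => ⁅f x, y⁆ + ⁅x, f y⁆)
      (by intros; simp [add_lie, lie_add]; abel)
      (by intros; simp [smul_lie, lie_smul, smul_add])
      (by intros; simp [lie_add, add_lie]; abel)
      (by intros; simp [lie_smul, smul_lie, smul_add])
    have hB : B1 = B2 := b.ext fun i => b.ext fun j => key i j
    have := LinearMap.congr_fun (LinearMap.congr_fun hB x) y
    simpa [B1, B2] using this
  have hpow : ∀ (k : ℕ) i, (f ^ k) (b i) = c i ^ k • b i := by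
    intro k i
    induction k with
    | zero => simp
    | succ n ih =>
        rw [pow_succ, Module.End.mul_apply, hfb, map_smul, ih, smul_smul, pow_succ]
        ring_nf
  have h1ω : 1 + ω = -ω ^ 2 := by linear_combination ω_sum
  refine ⟨⟨f, fun a b' => by rw [leib]; rw [← lie_skew b' (f a)]; abel⟩, ?_, ?_, ?_, ?_, ?_⟩
  · simpa [hc] using hfb 0
  · simpa [hc] using hfb 1
  · simpa [hc] using hfb 2
  · -- D^6 = 1
    refine b.ext fun i => ?_
    show (f ^ 6) (b i) = _
    rw [hpow 6 i, Module.End.one_apply]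
    fin_cases i <;> simp [hc]
    · have : ω ^ 6 = (ω ^ 3) ^ 2 := by ring
      rw [this, ω_pow3, one_pow, one_smul]
    · have : (1 + ω) ^ 6 = (ω ^ 3) ^ 4 := by rw [h1ω]; ring
      rw [this, ω_pow3, one_pow, one_smul]
  · -- no smaller period
    intro k hk hk6 heq
    have hval : ∀ i, c i ^ k • b i = b i := by
      intro i
      have := LinearMap.congr_fun heq (b i)
      rwa [show ((⟨f, _⟩ : LieDerivation ℂ L L).toLinearMap ^ k) (b i) = (f ^ k) (b i) from rfl,
        hpow k i, Module.End.one_apply] at this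
    have hone : ∀ i, c i ^ k = 1 := by
      intro i
      have h := hval i
      have : c i ^ k • b i = (1 : ℂ) • b i := by rw [h, one_smul]
      exact smul_left_injective ℂ (b.ne_zero i) this
    interval_cases k
    · exact ω_ne_one (by simpa [hc] using hone 1)
    · refine ω_prim.pow_ne_one_of_pos_of_lt (l := 2) (by norm_num) (by norm_num) ?_
      have := hone 1
      rwa [show c 1 = ω from rfl] at this
    · have h3 : (1 + ω) ^ 3 = -1 := by
        rw [h1ω]
        have : (-ω ^ 2) ^ 3 = -(ω ^ 3) ^ 2 := by ring
        rw [this, ω_pow3]; norm_num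
      have := hone 2
      rw [show c 2 = 1 + ω from rfl, h3] at this
      norm_num at this
    · have h4 : ω ^ 4 = ω := by
        have : ω ^ 4 = ω ^ 3 * ω := by ring
        rw [this, ω_pow3, one_mul]
      have := hone 1
      rw [show c 1 = ω from rfl, h4] at this
      exact ω_ne_one this
    · have h5 : ω ^ 5 = ω ^ 2 := by
        have : ω ^ 5 = ω ^ 3 * ω ^ 2 := by ring
        rw [this, ω_pow3, one_mul]
      have := hone 1
      rw [show c 1 = ω from rfl, h5] at this
      exact ω_prim.pow_ne_one_of_pos_of_lt (l := 2) (by norm_num) (by norm_num) this
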